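/- arXiv:1702.05661 — 7 statements merged into one kernel-verified Lean document; each statement's English description precedes it below -/
import Mathlib

section
/- Let T be a topological space and I a finite index set. For each i ∈ I let X_i and Y_i be irreducible closed subsets of T such that: (a) the topological Krull dimension of X_i equals that of Y_i and is finite, for every i ∈ I; (b) Y_i is not contained in Y_j whenever i ≠ j; and (c) ⋃_{i∈I} Y_i ⊆ ⋃_{i∈I} X_i. Then there exists a bijection b : I → I such that Y_i = X_{b(i)} for all i ∈ I, and consequently ⋃_{i∈I} X_i = ⋃_{i∈I} Y_i. -/
open Set Topology Order TopologicalSpace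

lemma auxClosedEmb {T : Type*} [TopologicalSpace T] {A B : Set T} (hA : IsClosed A)
    (h : A ⊆ B) : IsClosedEmbedding (Set.inclusion h) := by
  refine ⟨IsEmbedding.inclusion h, ?_⟩
  rw [Set.range_inclusion]
  exact hA.preimage continuous_subtype_val

lemma auxDimLe {T : Type*} [TopologicalSpace T] {A B : Set T} (hA : IsClosed A)
    (h : A ⊆ B) : topologicalKrullDim A ≤ topologicalKrullDim B :=
  (auxClosedEmb hA h).isInducing.topologicalKrullDim_le

lemma auxEq {T : Type*} [TopologicalSpace T] {A B : Set T} (hAc : IsClosed A)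
    (hAirr : IsIrreducible A) (hBirr : IsIrreducible B) (h : A ⊆ B) {n : ℕ}
    (hdA : topologicalKrullDim A = (n : ℕ∞)) (hdB : topologicalKrullDim B = (n : ℕ∞)) :
    A = B := by
  by_contra hne
  have hlt : A ⊂ B := h.ssubset_of_ne hne
  haveI : IrreducibleSpace A := Subtype.irreducibleSpace hAirr
  haveI : IrreducibleSpace B := Subtype.irreducibleSpace hBirr
  haveI : OrderTop (IrreducibleCloseds A) :=
    { top := ⟨Set.univ, IrreducibleSpace.isIrreducible_univ A, isClosed_univ⟩
      le_top := fun c => Set.subset_univ _ }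
  have htop : Order.height (⊤ : IrreducibleCloseds A) = (n : ℕ∞) := by
    have := Order.height_top_eq_krullDim (α := IrreducibleCloseds A)
    rw [show krullDim (IrreducibleCloseds A) = topologicalKrullDim A from rfl, hdA] at this
    exact_mod_cast this
  obtain ⟨p, hplast, hplen⟩ := Order.exists_series_of_height_eq_coe _ htop
  have emb := auxClosedEmb hAc h
  let F := IrreducibleCloseds.map (Set.inclusion h) emb.continuous
  have hF : StrictMono F := IrreducibleCloseds.map_strictMono_of_isInducing emb.isInducing
  set topB : IrreducibleCloseds B :=
    ⟨Set.univ, IrreducibleSpace.isIrreducible_univ B, isClosed_univ⟩ with htopB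
  have hlast : (p.map F hF).last < topB := by
    rw [LTSeries.last_map, hplast]
    obtain ⟨x, hxB, hxA⟩ := Set.exists_of_ssubset hlt
    constructor
    · intro y _; trivial
    · intro hcon
      have := hcon (Set.mem_univ (⟨x, hxB⟩ : B))
      simp only [F, IrreducibleCloseds.map] at this
      change (⟨x, hxB⟩ : B) ∈ closure (Set.inclusion h '' ((⊤ : IrreducibleCloseds A) : Set A)) at this
      rw [(emb.isClosedMap _ (⊤ : IrreducibleCloseds A).isClosed).closure_eq] at this
      obtain ⟨z, _, hz⟩ := this
      have hzx : (z : T) = x := congrArg Subtype.val hz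
      exact hxA (hzx ▸ z.2)
  have hle := LTSeries.length_le_krullDim ((p.map F hF).snoc topB hlast)
  rw [show krullDim (IrreducibleCloseds B) = topologicalKrullDim B from rfl, hdB] at hle
  simp only [RelSeries.snoc_length, LTSeries.map_length, hplen] at hle
  have : ((n + 1 : ℕ) : ℕ∞) ≤ (n : ℕ∞) := by exact_mod_cast hle
  have : (n + 1 : ℕ) ≤ n := by exact_mod_cast this
  omega





/-- Let `T` be a topological space and `I` a finite index set. For each
`i ∈ I` let `X i` and `Y i` be irreducible closed subsets of `T` such that the topological
Krull dimensions of `X i` and `Y i` agree and are finite, `Y i ⊄ Y j` for `i ≠ j`, and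
`⋃ Y i ⊆ ⋃ X i`.  Then there is a bijection `b : I → I` with `Y i = X (b i)` for all `i`,
and consequently `⋃ X i = ⋃ Y i`. -/
theorem stmt0 {T : Type*} [TopologicalSpace T] {I : Type*} [Finite I]
    (X Y : I → Set T)
    (hXcl : ∀ i, IsClosed (X i)) (hYcl : ∀ i, IsClosed (Y i))
    (hXirr : ∀ i, IsIrreducible (X i)) (hYirr : ∀ i, IsIrreducible (Y i))
    (hdim : ∀ i, ∃ n : ℕ,
      topologicalKrullDim (X i) = (n : ℕ∞) ∧ topologicalKrullDim (Y i) = (n : ℕ∞))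
    (hYnsub : ∀ i j, i ≠ j → ¬ Y i ⊆ Y j)
    (hsub : (⋃ i, Y i) ⊆ ⋃ i, X i) :
    (∃ b : I ≃ I, ∀ i, Y i = X (b i)) ∧ (⋃ i, X i) = ⋃ i, Y i := by
  classical
  haveI := Fintype.ofFinite I
  -- choose f with Y i ⊆ X (f i)
  have hchoice : ∀ i, ∃ j, Y i ⊆ X j := by
    intro i
    have hYi : Y i ⊆ ⋃₀ ↑(Finset.univ.image X) := by
      intro x hx
      obtain ⟨j, hj⟩ := Set.mem_iUnion.mp (hsub (Set.mem_iUnion.mpr ⟨i, hx⟩))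
      exact ⟨X j, by simp, hj⟩
    obtain ⟨z, hz, hsub'⟩ := (isIrreducible_iff_sUnion_isClosed.mp (hYirr i))
      (Finset.univ.image X) (by simp only [Finset.mem_image]; rintro _ ⟨j, -, rfl⟩; exact hXcl j)
      hYi
    simp only [Finset.mem_image, Finset.mem_univ, true_and] at hz
    obtain ⟨j, rfl⟩ := hz
    exact ⟨j, hsub'⟩
  choose f hf using hchoice
  choose d hd1 hd2 using hdim
  -- monotonicity of d along f
  have hmono : ∀ i, d i ≤ d (f i) := by
    intro i
    have := auxDimLe (hYcl i) (hf i)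
    rw [hd2 i, hd1 (f i)] at this
    exact_mod_cast this
  have hmonoIter : ∀ (k : ℕ) i, d i ≤ d (f^[k] i) := by
    intro k
    induction k with
    | zero => intro i; simp
    | succ k ih =>
      intro i
      rw [Function.iterate_succ_apply']
      exact (ih i).trans (hmono _)
  set Per : I → Prop := fun i => ∃ p, 0 < p ∧ f^[p] i = i with hPer
  -- key: periodic points satisfy Y i = X (f i)
  have hkey : ∀ i, Per i → Y i = X (f i) := by
    rintro i ⟨p, hp, hfp⟩
    have h1 : d (f i) ≤ d i := by
      have hthis := hmonoIter (p - 1) (f i)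
      have h' := Function.iterate_succ_apply f (p - 1) i
      rw [Nat.succ_eq_add_one, show p - 1 + 1 = p by omega, hfp] at h'
      rwa [← h'] at hthis
    have hde : d (f i) = d i := le_antisymm h1 (hmono i)
    exact auxEq (hYcl i) (hYirr i) (hXirr (f i)) (hf i) (hd2 i) (by rw [hd1 (f i), hde])
  -- every point whose image is periodic is periodic
  have hstep : ∀ i, Per (f i) → Per i := by
    rintro i ⟨p, hp, hfp⟩
    set c := f^[p - 1] (f i) with hc
    have hcper : Per c := by
      refine ⟨p, hp, ?_⟩
      rw [hc, ← Function.iterate_add_apply, add_comm, Function.iterate_add_apply, hfp]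
    have hfc : f c = f i := by
      have h' := Function.iterate_succ_apply' f (p - 1) (f i)
      rw [Nat.succ_eq_add_one, show p - 1 + 1 = p by omega, hfp] at h'
      rw [hc]
      exact h'.symm
    have hYsub : Y i ⊆ Y c := by
      rw [hkey c hcper, hfc]; exact hf i
    by_cases hic : i = c
    · rw [hic]; exact hcper
    · exact absurd hYsub (hYnsub i c hic)
  have hstepIter : ∀ (k : ℕ) i, Per (f^[k] i) → Per i := by
    intro k
    induction k with
    | zero => intro i h; exact h
    | succ k ih =>
      intro i h
      rw [Function.iterate_succ_apply] at h
      exact hstep i (ih (f i) h)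
  -- every point is periodic (pigeonhole)
  have hper : ∀ i, Per i := by
    intro i
    obtain ⟨a, b, hne, heq⟩ := Finite.exists_ne_map_eq_of_infinite (fun k : ℕ => f^[k] i)
    wlog hab : a < b generalizing a b
    · exact this b a hne.symm heq.symm (by omega)
    refine hstepIter a i ⟨b - a, by omega, ?_⟩
    rw [← Function.iterate_add_apply, Nat.sub_add_cancel hab.le]
    exact heq.symm
  have hYX : ∀ i, Y i = X (f i) := fun i => hkey i (hper i)
  have hinj : Function.Injective f := by
    intro i j hij
    by_contra hne
    exact hYnsub i j hne (by rw [hYX i, hYX j, hij])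
  have hbij : Function.Bijective f := Finite.injective_iff_bijective.mp hinj
  refine ⟨⟨Equiv.ofBijective f hbij, fun i => hYX i⟩, ?_⟩
  have : (⋃ i, Y i) = ⋃ i, X (f i) := Set.iUnion_congr hYX
  rw [this, Set.iUnion_congr (fun i => rfl : ∀ i, X (f i) = X (f i))]
  exact (hbij.surjective.iUnion_comp X).symm
end

section
/- Let X and X' be closed subsets of a topological space, let x be a point, and let U be an open neighborhood of x such that X ∩ U ⊆ X'. If every irreducible component of the subspace X contains x, then X ⊆ X'. -/
/-- Let `X`, `X'` be closed subsets of a topological space, `x` a point,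
and `U` an open neighborhood of `x` with `X ∩ U ⊆ X'`.  If every irreducible component of
the subspace `X` (i.e. every maximal irreducible subset of `X`) contains `x`, then
`X ⊆ X'`. -/
theorem stmt2 {T : Type*} [TopologicalSpace T] {X X' : Set T} {x : T} {U : Set T}
    (hX : IsClosed X) (hX' : IsClosed X') (hU : IsOpen U) (hxU : x ∈ U)
    (hXU : X ∩ U ⊆ X')
    (hcomp : ∀ Z : Set T, Z ⊆ X → IsIrreducible Z →
      (∀ Z' : Set T, Z' ⊆ X → IsIrreducible Z' → Z ⊆ Z' → Z = Z') → x ∈ Z) :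
    X ⊆ X' := by
  intro y hy
  -- find a maximal irreducible subset of X containing y, by Zorn's lemma
  obtain ⟨Z, hZ, hyZ, hmax⟩ : ∃ Z : Set T, (IsPreirreducible Z ∧ Z ⊆ X) ∧ ({y} : Set T) ⊆ Z ∧
      ∀ u, (IsPreirreducible u ∧ u ⊆ X) → Z ⊆ u → u = Z := by
    obtain ⟨m, hsm, hm⟩ :=
      zorn_subset_nonempty { t : Set T | IsPreirreducible t ∧ t ⊆ X }
        (fun c hc hcc _ =>
          ⟨⋃₀ c,
            ⟨fun u v hu hv ⟨b, hb, hbu⟩ ⟨a, ha, hav⟩ => by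
              obtain ⟨p, hpc, hbp⟩ := Set.mem_sUnion.1 hb
              obtain ⟨q, hqc, haq⟩ := Set.mem_sUnion.1 ha
              rcases hcc.total hpc hqc with hpq | hqp
              · obtain ⟨z, hzq, hzuv⟩ := (hc hqc).1 u v hu hv ⟨b, hpq hbp, hbu⟩ ⟨a, haq, hav⟩
                exact ⟨z, Set.mem_sUnion_of_mem hzq hqc, hzuv⟩
              · obtain ⟨z, hzp, hzuv⟩ := (hc hpc).1 u v hu hv ⟨b, hbp, hbu⟩ ⟨a, hqp haq, hav⟩
                exact ⟨z, Set.mem_sUnion_of_mem hzp hpc, hzuv⟩,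
              Set.sUnion_subset fun t ht => (hc ht).2⟩,
            fun _ hxc => Set.subset_sUnion_of_mem hxc⟩)
        {y} ⟨isPreirreducible_singleton, Set.singleton_subset_iff.2 hy⟩
    exact ⟨m, hm.prop, hsm, fun u hu hmu => (hm.eq_of_subset hu hmu).symm⟩
  have hZX : Z ⊆ X := hZ.2
  have hyZ' : y ∈ Z := hyZ rfl
  have hZirr : IsIrreducible Z := ⟨⟨y, hyZ'⟩, hZ.1⟩
  -- Z is a maximal irreducible subset of X, so x ∈ Z
  have hxZ : x ∈ Z := hcomp Z hZX hZirr
    (fun Z' hZ'X hZ'irr hZZ' => (hmax Z' ⟨hZ'irr.2, hZ'X⟩ hZZ').symm)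
  -- Z ∩ U is a nonempty open subset of the irreducible set Z, hence dense in Z
  have : y ∈ closure (Z ∩ U) := by
    rw [mem_closure_iff]
    intro V hV hyV
    obtain ⟨z, hzZ, hzVU⟩ := hZ.1 V U hV hU ⟨y, hyZ', hyV⟩ ⟨x, hxZ, hxU⟩
    exact ⟨z, hzVU.1, hzZ, hzVU.2⟩
  have hsub : closure (Z ∩ U) ⊆ X' :=
    hX'.closure_subset_iff.2 fun z hz => hXU ⟨hZX hz.1, hz.2⟩
  exact hsub this
end

section
/- Let n ≥ 1, let w : Fin n → ℕ be a weight function with w(i) > 0 for all i, and let I be an ideal of R = ℂ[x₁,…,xₙ] generated by w-weighted-homogeneous polynomials. Let T = ℂ[[x₁,…,xₙ]], φ : R → T the canonical inclusion, and K the ideal of T generated by φ(I). Then the quotient ring R/I is an integral domain if and only if the quotient ring T/K is an integral domain. -/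
open MvPolynomial Finsupp

namespace Stmt5Aux

variable {n : ℕ}

/-- The weighted-degree-`e` component of a multivariate power series, as a polynomial.
Well-defined (a polynomial) because the weights are positive. -/
noncomputable def pcomp (w : Fin n → ℕ) (e : ℕ) (f : MvPowerSeries (Fin n) ℂ) :
    MvPolynomial (Fin n) ℂ :=
  weightedHomogeneousComponent w e
    (MvPowerSeries.trunc ℂ (Finsupp.equivFunOnFinite.symm fun _ => e + 1) f)

lemma coeff_pcomp (hn : 1 ≤ n) {w : Fin n → ℕ} (hw : ∀ i, 0 < w i) (e : ℕ)
    (f : MvPowerSeries (Fin n) ℂ) (m : Fin n →₀ ℕ) :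
    MvPolynomial.coeff m (pcomp w e f)
      = if weight w m = e then MvPowerSeries.coeff m f else 0 := by
  classical
  rw [pcomp, coeff_weightedHomogeneousComponent, MvPowerSeries.coeff_trunc]
  by_cases h : weight w m = e
  · rw [if_pos h, if_pos h, if_pos]
    rw [lt_iff_le_not_ge]
    constructor
    · intro i
      have h1 : m i ≤ weight w m := Finsupp.le_weight w (hw i).ne' m
      have h2 : (Finsupp.equivFunOnFinite.symm fun _ : Fin n => e + 1) i = e + 1 := rfl
      rw [h2]
      omega
    · intro hle
      have i : Fin n := ⟨0, hn⟩
      have h1 : m i ≤ weight w m := Finsupp.le_weight w (hw i).ne' m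
      have h2 : (Finsupp.equivFunOnFinite.symm fun _ : Fin n => e + 1) i = e + 1 := rfl
      have := hle i
      rw [h2] at this
      omega
  · rw [if_neg h, if_neg h]

lemma pcomp_coe (hn : 1 ≤ n) {w : Fin n → ℕ} (hw : ∀ i, 0 < w i) (e : ℕ)
    (p : MvPolynomial (Fin n) ℂ) :
    pcomp w e (↑p : MvPowerSeries (Fin n) ℂ) = weightedHomogeneousComponent w e p := by
  classical
  ext m
  rw [coeff_pcomp hn hw, coeff_weightedHomogeneousComponent, MvPolynomial.coeff_coe]

lemma pcomp_mul (hn : 1 ≤ n) {w : Fin n → ℕ} (hw : ∀ i, 0 < w i) (e : ℕ)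
    (f g : MvPowerSeries (Fin n) ℂ) :
    pcomp w e (f * g)
      = ∑ a ∈ Finset.range (e + 1), pcomp w a f * pcomp w (e - a) g := by
  classical
  ext m
  rw [MvPolynomial.coeff_sum]
  simp only [MvPolynomial.coeff_mul, coeff_pcomp hn hw]
  rw [Finset.sum_comm]
  by_cases h : weight w m = e
  · rw [if_pos h, MvPowerSeries.coeff_mul]
    apply Finset.sum_congr rfl
    intro p hp
    rw [Finset.HasAntidiagonal.mem_antidiagonal] at hp
    have hwp : weight w p.1 + weight w p.2 = e := by
      rw [← map_add, hp, h]
    rw [Finset.sum_eq_single (weight w p.1)]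
    · rw [if_pos rfl, if_pos (by omega)]
    · intro b _ hne
      rw [if_neg (fun hh => hne hh.symm), zero_mul]
    · intro hb
      exact absurd (Finset.mem_range.2 (by omega)) hb
  · rw [if_neg h]
    symm
    apply Finset.sum_eq_zero
    intro p hp
    apply Finset.sum_eq_zero
    intro a ha
    rw [Finset.HasAntidiagonal.mem_antidiagonal] at hp
    rw [Finset.mem_range] at ha
    by_cases h1 : weight w p.1 = a
    · by_cases h2 : weight w p.2 = e - a
      · exfalso
        apply h
        rw [← hp, map_add, h1, h2]
        omega
      · rw [if_neg h2, mul_zero]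
    · rw [if_neg h1, zero_mul]

lemma whc_mul_expand (hn : 1 ≤ n) {w : Fin n → ℕ} (hw : ∀ i, 0 < w i) (e : ℕ)
    (p q : MvPolynomial (Fin n) ℂ) :
    weightedHomogeneousComponent w e (p * q)
      = ∑ a ∈ Finset.range (e + 1),
          weightedHomogeneousComponent w a p * weightedHomogeneousComponent w (e - a) q := by
  have h := pcomp_mul hn hw e (↑p) (↑q)
  rw [← MvPolynomial.coe_mul, pcomp_coe hn hw] at h
  rw [h]
  exact Finset.sum_congr rfl fun a _ => by rw [pcomp_coe hn hw, pcomp_coe hn hw]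

lemma whc_mem_span (hn : 1 ≤ n) {w : Fin n → ℕ} (hw : ∀ i, 0 < w i)
    {S : Set (MvPolynomial (Fin n) ℂ)}
    (hS : ∀ f ∈ S, ∃ d, IsWeightedHomogeneous w f d) {p : MvPolynomial (Fin n) ℂ}
    (hp : p ∈ Ideal.span S) :
    ∀ e, weightedHomogeneousComponent w e p ∈ Ideal.span S := by
  refine Submodule.span_induction
    (p := fun x _ => ∀ e, weightedHomogeneousComponent w e x ∈ Ideal.span S)
    ?_ ?_ ?_ ?_ hp
  · intro x hx e
    obtain ⟨d, hd⟩ := hS x hx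
    by_cases h : e = d
    · rw [h, hd.weightedHomogeneousComponent_same]
      exact Ideal.subset_span hx
    · rw [hd.weightedHomogeneousComponent_ne e h]
      exact zero_mem _
  · intro e
    rw [map_zero]
    exact zero_mem _
  · intro x y hx hy ihx ihy e
    rw [map_add]
    exact add_mem (ihx e) (ihy e)
  · intro a x hx ih e
    rw [smul_eq_mul, whc_mul_expand hn hw]
    exact sum_mem fun a _ => Ideal.mul_mem_left _ _ (ih _)

lemma pcomp_mem (hn : 1 ≤ n) {w : Fin n → ℕ} (hw : ∀ i, 0 < w i)
    {S : Set (MvPolynomial (Fin n) ℂ)}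
    (hS : ∀ f ∈ S, ∃ d, IsWeightedHomogeneous w f d) {f : MvPowerSeries (Fin n) ℂ}
    (hf : f ∈ Ideal.map (coeToMvPowerSeries.ringHom :
        MvPolynomial (Fin n) ℂ →+* MvPowerSeries (Fin n) ℂ) (Ideal.span S)) :
    ∀ e, pcomp w e f ∈ Ideal.span S := by
  rw [Ideal.map_span] at hf
  refine Submodule.span_induction
    (p := fun x _ => ∀ e, pcomp w e x ∈ Ideal.span S) ?_ ?_ ?_ ?_ hf
  · rintro x ⟨q, hq, rfl⟩ e
    rw [coeToMvPowerSeries.ringHom_apply, pcomp_coe hn hw]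
    exact whc_mem_span hn hw hS (Ideal.subset_span hq) e
  · intro e
    rw [show pcomp w e 0 = 0 by simp [pcomp]]
    exact zero_mem _
  · intro x y hx hy ihx ihy e
    rw [show pcomp w e (x + y) = pcomp w e x + pcomp w e y by simp [pcomp, map_add]]
    exact add_mem (ihx e) (ihy e)
  · intro a x hx ih e
    rw [smul_eq_mul, pcomp_mul hn hw]
    exact sum_mem fun a _ => Ideal.mul_mem_left _ _ (ih _)

lemma mem_map_of_pcomp_mem (hn : 1 ≤ n) {w : Fin n → ℕ} (hw : ∀ i, 0 < w i)
    {S : Set (MvPolynomial (Fin n) ℂ)}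
    (hS : ∀ f ∈ S, ∃ d, IsWeightedHomogeneous w f d) {f : MvPowerSeries (Fin n) ℂ}
    (hf : ∀ e, pcomp w e f ∈ Ideal.span S) :
    f ∈ Ideal.map (coeToMvPowerSeries.ringHom :
        MvPolynomial (Fin n) ℂ →+* MvPowerSeries (Fin n) ℂ) (Ideal.span S) := by
  classical
  -- Step 1: a finite subset `T ⊆ S` with the same span.
  obtain ⟨Y, hY⟩ : (Ideal.span S).FG := IsNoetherian.noetherian _
  have hYmem : ∀ y ∈ Y, ∃ Ty : Finset (MvPolynomial (Fin n) ℂ),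
      ↑Ty ⊆ S ∧ y ∈ Ideal.span (↑Ty : Set (MvPolynomial (Fin n) ℂ)) := by
    intro y hy
    have : y ∈ Ideal.span S := by
      rw [← hY]
      exact Submodule.subset_span hy
    exact Submodule.mem_span_finite_of_mem_span this
  choose Ty hTy1 hTy2 using hYmem
  set T : Finset (MvPolynomial (Fin n) ℂ) :=
    Y.attach.biUnion (fun y => Ty y.1 y.2) with hT
  have hTsub : (T : Set (MvPolynomial (Fin n) ℂ)) ⊆ S := by
    intro t ht
    rw [hT] at ht
    simp only [Finset.coe_biUnion, Set.mem_iUnion, Finset.mem_coe] at ht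
    obtain ⟨y, hy, hty⟩ := ht
    exact hTy1 y.1 y.2 hty
  have hspanT : Ideal.span S = Ideal.span (T : Set (MvPolynomial (Fin n) ℂ)) := by
    apply le_antisymm
    · rw [← hY]
      rw [Ideal.span_le]
      intro y hy
      have h1 : y ∈ Ideal.span (↑(Ty y hy) : Set (MvPolynomial (Fin n) ℂ)) := hTy2 y hy
      refine Ideal.span_mono ?_ h1
      intro t ht
      rw [hT]
      simp only [Finset.coe_biUnion, Set.mem_iUnion, Finset.mem_coe]
      exact ⟨⟨y, hy⟩, Finset.mem_attach _ _, ht⟩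
    · exact Ideal.span_mono hTsub
  -- Step 2: degrees.
  let d : MvPolynomial (Fin n) ℂ → ℕ := fun t =>
    if h : ∃ m, IsWeightedHomogeneous w t m then h.choose else 0
  have hd : ∀ t ∈ T, IsWeightedHomogeneous w t (d t) := by
    intro t ht
    have h : ∃ m, IsWeightedHomogeneous w t m := hS t (hTsub ht)
    simp only [d, dif_pos h]
    exact h.choose_spec
  -- Step 3: coefficients for each degree.
  have hrep : ∀ e, ∃ c : MvPolynomial (Fin n) ℂ → MvPolynomial (Fin n) ℂ,
      ∑ t ∈ T, c t * t = pcomp w e f := by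
    intro e
    have h1 : pcomp w e f ∈ Ideal.span (T : Set (MvPolynomial (Fin n) ℂ)) := by
      rw [← hspanT]; exact hf e
    obtain ⟨c, -, hc⟩ := Submodule.mem_span_finset.1 h1
    exact ⟨c, by simpa [smul_eq_mul] using hc⟩
  choose c hc using hrep
  -- Step 4: homogeneous coefficients.
  let b : ℕ → MvPolynomial (Fin n) ℂ → MvPolynomial (Fin n) ℂ := fun e t =>
    if d t ≤ e then weightedHomogeneousComponent w (e - d t) (c e t) else 0
  have hwhcmul : ∀ (e : ℕ) (p t : MvPolynomial (Fin n) ℂ) (dt : ℕ),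
      IsWeightedHomogeneous w t dt →
      weightedHomogeneousComponent w e (p * t)
        = (if dt ≤ e then weightedHomogeneousComponent w (e - dt) p else 0) * t := by
    intro e p t dt ht
    rw [whc_mul_expand hn hw]
    by_cases hle : dt ≤ e
    · rw [if_pos hle]
      rw [Finset.sum_eq_single (e - dt)]
      · rw [show e - (e - dt) = dt from by omega, ht.weightedHomogeneousComponent_same]
      · intro a ha hne
        rw [Finset.mem_range] at ha
        rw [ht.weightedHomogeneousComponent_ne (e - a) (by omega), mul_zero]
      · intro hmem
        exact absurd (Finset.mem_range.2 (by omega)) hmem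
    · rw [if_neg hle, zero_mul]
      apply Finset.sum_eq_zero
      intro a ha
      rw [Finset.mem_range] at ha
      rw [ht.weightedHomogeneousComponent_ne (e - a) (by omega), mul_zero]
  have claim1 : ∀ e, ∑ t ∈ T, b e t * t = pcomp w e f := by
    intro e
    have h1 : weightedHomogeneousComponent w e (pcomp w e f) = pcomp w e f :=
      IsWeightedHomogeneous.weightedHomogeneousComponent_same
        (weightedHomogeneousComponent_isWeightedHomogeneous e _)
    conv_rhs => rw [← h1, ← hc e]
    rw [map_sum]
    exact Finset.sum_congr rfl fun t ht => (hwhcmul e (c e t) t (d t) (hd t ht)).symm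
  -- Step 5: assemble the power series coefficients.
  let A : MvPolynomial (Fin n) ℂ → MvPowerSeries (Fin n) ℂ := fun t m =>
    MvPolynomial.coeff m (b (weight w m + d t) t)
  have hA : ∀ t m, MvPowerSeries.coeff m (A t) = MvPolynomial.coeff m (b (weight w m + d t) t) :=
    fun t m => rfl
  have hfeq : f = ∑ t ∈ T, A t * (coeToMvPowerSeries.ringHom t : MvPowerSeries (Fin n) ℂ) := by
    ext m
    rw [map_sum]
    have hLHS : MvPowerSeries.coeff m f = MvPolynomial.coeff m (pcomp w (weight w m) f) := by
      rw [coeff_pcomp hn hw, if_pos rfl]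
    rw [hLHS, ← claim1 (weight w m), MvPolynomial.coeff_sum]
    apply Finset.sum_congr rfl
    intro t ht
    rw [MvPowerSeries.coeff_mul, MvPolynomial.coeff_mul]
    apply Finset.sum_congr rfl
    intro p hp
    rw [Finset.HasAntidiagonal.mem_antidiagonal] at hp
    rw [hA, coeToMvPowerSeries.ringHom_apply, MvPolynomial.coeff_coe]
    by_cases hv : MvPolynomial.coeff p.2 t = 0
    · rw [hv, mul_zero, mul_zero]
    · have hdeg : weight w p.2 = d t := hd t ht hv
      have : weight w p.1 + d t = weight w m := by
        rw [← hdeg, ← map_add, hp]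
      rw [this]
  rw [hfeq]
  exact sum_mem fun t ht => Ideal.mul_mem_left _ _
    (Ideal.mem_map_of_mem _ (Ideal.subset_span (hTsub ht)))

end Stmt5Aux

open Stmt5Aux MvPolynomial Finsupp in
/-- Let `n ≥ 1`, `w : Fin n → ℕ` a positive weight function, and `I` an
ideal of `R = ℂ[x₁,…,xₙ]` generated by `w`-weighted-homogeneous polynomials.  Let
`T = ℂ[[x₁,…,xₙ]]`, `φ : R → T` the canonical inclusion, and `K = I·T`.  Then `R/I` is an
integral domain iff `T/K` is an integral domain. -/
theorem stmt5 {n : ℕ} (hn : 1 ≤ n) (w : Fin n → ℕ) (hw : ∀ i, 0 < w i)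
    (S : Set (MvPolynomial (Fin n) ℂ))
    (hS : ∀ f ∈ S, ∃ d : ℕ, MvPolynomial.IsWeightedHomogeneous w f d)
    (I : Ideal (MvPolynomial (Fin n) ℂ)) (hI : I = Ideal.span S)
    (φ : MvPolynomial (Fin n) ℂ →+* MvPowerSeries (Fin n) ℂ)
    (hφ : φ = MvPolynomial.coeToMvPowerSeries.ringHom)
    (K : Ideal (MvPowerSeries (Fin n) ℂ)) (hK : K = I.map φ) :
    IsDomain (MvPolynomial (Fin n) ℂ ⧸ I) ↔ IsDomain (MvPowerSeries (Fin n) ℂ ⧸ K) := by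
  classical
  subst hφ hI hK
  rw [Ideal.Quotient.isDomain_iff_prime, Ideal.Quotient.isDomain_iff_prime]
  constructor
  · intro hP
    constructor
    · intro hKtop
      have h1 : (1 : MvPowerSeries (Fin n) ℂ) ∈
          Ideal.map coeToMvPowerSeries.ringHom (Ideal.span S) := by
        rw [hKtop]; exact Submodule.mem_top
      have h2 := pcomp_mem hn hw hS h1 0
      have hone : pcomp w 0 (1 : MvPowerSeries (Fin n) ℂ) = 1 := by
        have hcoe : ((1 : MvPolynomial (Fin n) ℂ) : MvPowerSeries (Fin n) ℂ) = 1 :=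
          MvPolynomial.coe_one
        rw [← hcoe, pcomp_coe hn hw,
          (isWeightedHomogeneous_one ℂ w).weightedHomogeneousComponent_same]
      rw [hone] at h2
      exact hP.ne_top ((Ideal.eq_top_iff_one _).2 h2)
    · intro f g hfg
      by_contra hcon
      push_neg at hcon
      obtain ⟨hfK, hgK⟩ := hcon
      have hf : ∃ e, pcomp w e f ∉ Ideal.span S := by
        by_contra h; push_neg at h
        exact hfK (mem_map_of_pcomp_mem hn hw hS h)
      have hg : ∃ e, pcomp w e g ∉ Ideal.span S := by
        by_contra h; push_neg at h
        exact hgK (mem_map_of_pcomp_mem hn hw hS h)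
      set e0 := Nat.find hf with he0
      set e1 := Nat.find hg with he1
      have hmemfg := pcomp_mem hn hw hS hfg (e0 + e1)
      rw [pcomp_mul hn hw] at hmemfg
      have hterm : pcomp w e0 f * pcomp w e1 g ∈ Ideal.span S := by
        have hsum : ∑ a ∈ (Finset.range (e0 + e1 + 1)).erase e0,
            pcomp w a f * pcomp w (e0 + e1 - a) g ∈ Ideal.span S := by
          apply sum_mem
          intro a ha
          rw [Finset.mem_erase, Finset.mem_range] at ha
          obtain ⟨hne, hlt⟩ := ha
          rcases Nat.lt_or_ge a e0 with hlt' | hge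
          · exact Ideal.mul_mem_right _ _ (not_not.1 (Nat.find_min hf hlt'))
          · have : e0 + e1 - a < e1 := by omega
            exact Ideal.mul_mem_left _ _ (not_not.1 (Nat.find_min hg this))
        have hmem0 : e0 ∈ Finset.range (e0 + e1 + 1) := Finset.mem_range.2 (by omega)
        have heq := Finset.add_sum_erase _
          (fun a => pcomp w a f * pcomp w (e0 + e1 - a) g) hmem0
        rw [← heq] at hmemfg
        simp only [Nat.add_sub_cancel_left] at hmemfg
        have := Ideal.sub_mem _ hmemfg hsum
        simpa using this
      rcases hP.mem_or_mem hterm with h | h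
      · exact Nat.find_spec hf h
      · exact Nat.find_spec hg h
  · intro hK
    have hcomap : Ideal.span S = Ideal.comap coeToMvPowerSeries.ringHom
        (Ideal.map coeToMvPowerSeries.ringHom (Ideal.span S)) := by
      apply le_antisymm
      · exact Ideal.le_comap_map
      · intro q hq
        rw [Ideal.mem_comap] at hq
        have hall := pcomp_mem hn hw hS hq
        have hsum := sum_weightedHomogeneousComponent (w := w) (φ := q)
        rw [finsum_eq_sum _ (weightedHomogeneousComponent_finsupp q)] at hsum
        rw [← hsum]
        apply sum_mem
        intro e he
        have := hall e
        rw [coeToMvPowerSeries.ringHom_apply, pcomp_coe hn hw] at this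
        exact this
    rw [hcomap]
    exact hK.comap _
end

section
/- Let n ≥ 1, let w : Fin n → ℕ be a weight function with w(i) > 0 for all i, and let I be an ideal of R = ℂ[x₁,…,xₙ] generated by w-weighted-homogeneous polynomials. Let T = ℂ[[x₁,…,xₙ]], φ : R → T the canonical inclusion, and K the ideal of T generated by φ(I). Then the quotient ring R/I is reduced (has no nonzero nilpotent elements) if and only if the quotient ring T/K is reduced. -/
open MvPolynomial

namespace Stmt6Aux

variable {n : ℕ} (w : Fin n → ℕ)

lemma weight_finite (hw : ∀ i, 0 < w i) (e : ℕ) :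
    {m : Fin n →₀ ℕ | Finsupp.weight w m = e}.Finite := by
  apply Set.Finite.subset (Set.finite_Iic (Finsupp.equivFunOnFinite.symm fun _ => e))
  intro m hm
  simp only [Set.mem_setOf_eq] at hm
  intro i
  have h1 : m i ≤ Finsupp.weight w m := Finsupp.le_weight w (Nat.pos_iff_ne_zero.mp (hw i)) m
  simpa [hm] using h1

/-- The weighted-homogeneous component of degree `e` of a power series, as a polynomial. -/
noncomputable def comp (hw : ∀ i, 0 < w i) (e : ℕ) (F : MvPowerSeries (Fin n) ℂ) :
    MvPolynomial (Fin n) ℂ :=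
  ∑ m ∈ (weight_finite w hw e).toFinset, monomial m (MvPowerSeries.coeff m F)

variable (hw : ∀ i, 0 < w i)

lemma coeff_comp (e : ℕ) (F : MvPowerSeries (Fin n) ℂ) (m : Fin n →₀ ℕ) :
    coeff m (comp w hw e F) =
      if Finsupp.weight w m = e then MvPowerSeries.coeff m F else 0 := by
  rw [comp, MvPolynomial.coeff_sum]
  rw [Finset.sum_congr rfl (fun x _ => coeff_monomial m x (MvPowerSeries.coeff x F))]
  rw [Finset.sum_ite_eq']
  simp [Set.Finite.mem_toFinset]

lemma comp_add (e : ℕ) (F G : MvPowerSeries (Fin n) ℂ) :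
    comp w hw e (F + G) = comp w hw e F + comp w hw e G := by
  ext m
  simp only [coeff_comp, map_add, MvPolynomial.coeff_add]
  split <;> simp

lemma comp_sub (e : ℕ) (F G : MvPowerSeries (Fin n) ℂ) :
    comp w hw e (F - G) = comp w hw e F - comp w hw e G := by
  ext m
  simp only [coeff_comp, map_sub, MvPolynomial.coeff_sub]
  split <;> simp

lemma isWH_comp (e : ℕ) (F : MvPowerSeries (Fin n) ℂ) :
    IsWeightedHomogeneous w (comp w hw e F) e := by
  intro m hm
  rw [coeff_comp] at hm
  by_contra h
  exact hm (if_neg h)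

lemma comp_coe (e : ℕ) (p : MvPolynomial (Fin n) ℂ) :
    comp w hw e (MvPolynomial.coeToMvPowerSeries.ringHom p) =
      weightedHomogeneousComponent w e p := by
  ext m
  rw [coeff_comp, coeff_weightedHomogeneousComponent]
  rw [MvPolynomial.coeToMvPowerSeries.ringHom_apply, MvPolynomial.coeff_coe]


lemma comp_mul (e : ℕ) (A F : MvPowerSeries (Fin n) ℂ) :
    comp w hw e (A * F) =
      ∑ d ∈ Finset.range (e + 1), comp w hw (e - d) A * comp w hw d F := by
  classical
  ext m
  rw [coeff_comp, MvPolynomial.coeff_sum]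
  by_cases h : Finsupp.weight w m = e
  · rw [if_pos h, MvPowerSeries.coeff_mul]
    have : ∀ d ∈ Finset.range (e + 1),
        coeff m (comp w hw (e - d) A * comp w hw d F) =
        ∑ pq ∈ Finset.HasAntidiagonal.antidiagonal m,
          (if Finsupp.weight w pq.1 = e - d then MvPowerSeries.coeff pq.1 A else 0) *
          (if Finsupp.weight w pq.2 = d then MvPowerSeries.coeff pq.2 F else 0) := by
      intro d _
      rw [MvPolynomial.coeff_mul]
      exact Finset.sum_congr rfl fun pq _ => by rw [coeff_comp, coeff_comp]
    rw [Finset.sum_congr rfl this, Finset.sum_comm]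
    apply Finset.sum_congr rfl
    intro pq hpq
    have hpqm : pq.1 + pq.2 = m := Finset.HasAntidiagonal.mem_antidiagonal.mp hpq
    have hadd : Finsupp.weight w pq.1 + Finsupp.weight w pq.2 = e := by
      rw [← map_add, hpqm, h]
    rw [Finset.sum_eq_single (Finsupp.weight w pq.2)]
    · rw [if_pos (by omega), if_pos rfl]
    · intro b _ hb
      have hne : Finsupp.weight w pq.2 ≠ b := fun hc => hb hc.symm
      simp [hne]
    · intro habs
      exact absurd (Finset.mem_range.mpr (by omega)) habs
  · rw [if_neg h]
    symm
    apply Finset.sum_eq_zero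
    intro d hd
    have hle : d ≤ e := by
      have := Finset.mem_range.mp hd; omega
    have hWH : IsWeightedHomogeneous w (comp w hw (e - d) A * comp w hw d F) e := by
      have := (isWH_comp w hw (e - d) A).mul (isWH_comp w hw d F)
      rwa [Nat.sub_add_cancel hle] at this
    by_contra hne
    exact h (hWH hne)


lemma comp_mul_low {e d : ℕ} {A F : MvPowerSeries (Fin n) ℂ}
    (hA : ∀ c < e, comp w hw c A = 0) (hF : ∀ c < d, comp w hw c F = 0) :
    (∀ c < e + d, comp w hw c (A * F) = 0) ∧
      comp w hw (e + d) (A * F) = comp w hw e A * comp w hw d F := by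
  constructor
  · intro c hc
    rw [comp_mul]
    apply Finset.sum_eq_zero
    intro d' hd'
    have hd'c : d' ≤ c := by have := Finset.mem_range.mp hd'; omega
    by_cases h1 : d' < d
    · rw [hF d' h1, mul_zero]
    · rw [hA (c - d') (by omega), zero_mul]
  · rw [comp_mul]
    rw [Finset.sum_eq_single d]
    · rw [Nat.add_sub_cancel]
    · intro b hb hbd
      have hble : b ≤ e + d := by have := Finset.mem_range.mp hb; omega
      by_cases h1 : b < d
      · rw [hF b h1, mul_zero]
      · rw [hA (e + d - b) (by omega), zero_mul]
    · intro habs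
      exact absurd (Finset.mem_range.mpr (by omega)) habs

lemma comp_pow {e : ℕ} {G : MvPowerSeries (Fin n) ℂ}
    (hG : ∀ c < e, comp w hw c G = 0) :
    ∀ k, 1 ≤ k → (∀ c < k * e, comp w hw c (G ^ k) = 0) ∧
      comp w hw (k * e) (G ^ k) = (comp w hw e G) ^ k := by
  intro k hk
  induction k, hk using Nat.le_induction with
  | base =>
    simp only [pow_one, one_mul]
    exact ⟨hG, trivial⟩
  | succ k hk IH =>
    have hpow : G ^ (k + 1) = G ^ k * G := by rw [pow_succ]
    have h1 := comp_mul_low w hw (e := k * e) (d := e) IH.1 hG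
    constructor
    · intro c hc
      rw [hpow]
      exact h1.1 c (by ring_nf; ring_nf at hc; omega)
    · rw [hpow, show (k + 1) * e = k * e + e by ring, h1.2, IH.2, pow_succ]

lemma comp_zero (e : ℕ) : comp w hw e (0 : MvPowerSeries (Fin n) ℂ) = 0 := by
  ext m
  rw [coeff_comp]
  simp

lemma comp_mem_of_mem_K {S : Set (MvPolynomial (Fin n) ℂ)}
    (hS : ∀ f ∈ S, ∃ d : ℕ, IsWeightedHomogeneous w f d)
    {F : MvPowerSeries (Fin n) ℂ}
    (hF : F ∈ Ideal.map (MvPolynomial.coeToMvPowerSeries.ringHom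
      (σ := Fin n) (R := ℂ)) (Ideal.span S)) (e : ℕ) :
    comp w hw e F ∈ Ideal.span S := by
  rw [Ideal.map_span] at hF
  refine Submodule.span_induction
    (p := fun F _ => ∀ e, comp w hw e F ∈ Ideal.span S) ?_ ?_ ?_ ?_ hF e
  · rintro x ⟨s, hsS, rfl⟩ e
    rw [comp_coe]
    obtain ⟨d, hd⟩ := hS s hsS
    by_cases he : e = d
    · subst he
      rw [hd.weightedHomogeneousComponent_same]
      exact Ideal.subset_span hsS
    · rw [hd.weightedHomogeneousComponent_ne e he]
      exact zero_mem _
  · intro e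
    rw [comp_zero]
    exact zero_mem _
  · intro x y _ _ hx hy e
    rw [comp_add]
    exact add_mem (hx e) (hy e)
  · intro a x _ hx e
    rw [smul_eq_mul, comp_mul]
    exact Ideal.sum_mem _ fun d _ => Ideal.mul_mem_left _ _ (hx d)

lemma whc_mul_homog {c f : MvPolynomial (Fin n) ℂ} {d e : ℕ}
    (hf : IsWeightedHomogeneous w f d) :
    weightedHomogeneousComponent w e (c * f) =
      (if d ≤ e then weightedHomogeneousComponent w (e - d) c else 0) * f := by
  classical
  ext m
  rw [coeff_weightedHomogeneousComponent]
  by_cases hd : d ≤ e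
  · rw [if_pos hd, MvPolynomial.coeff_mul, MvPolynomial.coeff_mul]
    by_cases h : Finsupp.weight w m = e
    · rw [if_pos h]
      apply Finset.sum_congr rfl
      intro pq hpq
      by_cases hq : coeff pq.2 f = 0
      · rw [hq, mul_zero, mul_zero]
      · have hw2 := hf hq
        have hsum : Finsupp.weight w pq.1 + Finsupp.weight w pq.2 = e := by
          rw [← map_add, Finset.HasAntidiagonal.mem_antidiagonal.mp hpq, h]
        rw [coeff_weightedHomogeneousComponent, if_pos (by omega)]
    · rw [if_neg h]
      symm
      apply Finset.sum_eq_zero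
      intro pq hpq
      by_cases hq : coeff pq.2 f = 0
      · rw [hq, mul_zero]
      · have hw2 := hf hq
        have hsum : Finsupp.weight w pq.1 + Finsupp.weight w pq.2 = Finsupp.weight w m := by
          rw [← map_add, Finset.HasAntidiagonal.mem_antidiagonal.mp hpq]
        rw [coeff_weightedHomogeneousComponent, if_neg (by omega), zero_mul]
  · rw [if_neg hd, zero_mul, MvPolynomial.coeff_zero]
    by_cases h : Finsupp.weight w m = e
    · rw [if_pos h, MvPolynomial.coeff_mul]
      apply Finset.sum_eq_zero
      intro pq hpq
      by_cases hq : coeff pq.2 f = 0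
      · rw [hq, mul_zero]
      · have hw2 := hf hq
        have hsum : Finsupp.weight w pq.1 + Finsupp.weight w pq.2 = e := by
          rw [← map_add, Finset.HasAntidiagonal.mem_antidiagonal.mp hpq, h]
        omega
    · rw [if_neg h]

lemma homog_rep {ι : Type} [Fintype ι] (f : ι → MvPolynomial (Fin n) ℂ) (dj : ι → ℕ)
    (hf : ∀ j, IsWeightedHomogeneous w (f j) (dj j)) {p : MvPolynomial (Fin n) ℂ} {e : ℕ}
    (hp : IsWeightedHomogeneous w p e) (hmem : p ∈ Ideal.span (Set.range f)) :
    ∃ a : ι → MvPolynomial (Fin n) ℂ, (∑ j, a j * f j = p) ∧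
      ∀ j m, MvPolynomial.coeff m (a j) ≠ 0 → Finsupp.weight w m + dj j = e := by
  classical
  obtain ⟨c, hc⟩ := Ideal.mem_span_range_iff_exists_fun.mp hmem
  refine ⟨fun j => if dj j ≤ e then weightedHomogeneousComponent w (e - dj j) (c j) else 0,
    ?_, ?_⟩
  · have h1 := congrArg (weightedHomogeneousComponent w e) hc
    rw [map_sum, hp.weightedHomogeneousComponent_same] at h1
    rw [← h1]
    apply Finset.sum_congr rfl
    intro j _
    rw [whc_mul_homog w (hf j)]
  · intro j m hm
    simp only at hm
    by_cases hd : dj j ≤ e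
    · rw [if_pos hd, coeff_weightedHomogeneousComponent] at hm
      by_cases hc' : Finsupp.weight w m = e - dj j
      · omega
      · exact absurd (if_neg hc') hm
    · rw [if_neg hd] at hm
      simp at hm

lemma exists_finset_span {A : Type*} [CommRing A] [IsNoetherianRing A] (S : Set A) :
    ∃ t : Finset A, ↑t ⊆ S ∧ Ideal.span (↑t : Set A) = Ideal.span S := by
  classical
  obtain ⟨t₁, ht₁⟩ := (isNoetherian_def.mp inferInstance) (Ideal.span S)
  have hmem : ∀ x : t₁, (x : A) ∈ Submodule.span A S := fun x => by
    have h1 : (x : A) ∈ Submodule.span A (↑t₁ : Set A) := Submodule.subset_span x.2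
    rw [show Submodule.span A (↑t₁ : Set A) = Ideal.span S from ht₁] at h1
    exact h1
  choose u hu₁ hu₂ using fun x : t₁ =>
    Submodule.mem_span_finite_of_mem_span (hmem x)
  refine ⟨t₁.attach.biUnion u, ?_, ?_⟩
  · intro x hx
    obtain ⟨y, _, hy⟩ := Finset.mem_biUnion.mp hx
    exact hu₁ y hy
  · apply le_antisymm
    · apply Ideal.span_mono
      intro x hx
      obtain ⟨y, _, hy⟩ := Finset.mem_biUnion.mp hx
      exact hu₁ y hy
    · rw [← ht₁]
      apply Submodule.span_le.mpr
      intro x hx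
      have := hu₂ ⟨x, hx⟩
      refine Submodule.span_mono ?_ this
      intro z hz
      exact Finset.mem_coe.mpr (Finset.mem_biUnion.mpr ⟨⟨x, hx⟩, Finset.mem_attach _ _, hz⟩)

lemma mem_K_of_comps {S : Set (MvPolynomial (Fin n) ℂ)}
    (hS : ∀ f ∈ S, ∃ d : ℕ, IsWeightedHomogeneous w f d)
    {F : MvPowerSeries (Fin n) ℂ}
    (hF : ∀ e, comp w hw e F ∈ Ideal.span S) :
    F ∈ Ideal.map (MvPolynomial.coeToMvPowerSeries.ringHom (σ := Fin n) (R := ℂ))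
      (Ideal.span S) := by
  classical
  obtain ⟨t, htS, htspan⟩ := exists_finset_span S
  set f : {x // x ∈ t} → MvPolynomial (Fin n) ℂ := fun j => (j : MvPolynomial (Fin n) ℂ)
    with hfdef
  have hrange : Set.range f = (t : Set (MvPolynomial (Fin n) ℂ)) := Subtype.range_coe
  choose dj hdj using fun j : {x // x ∈ t} => hS j (htS j.2)
  have hrep : ∀ e, ∃ a : {x // x ∈ t} → MvPolynomial (Fin n) ℂ,
      (∑ j, a j * f j = comp w hw e F) ∧
      ∀ j m, coeff m (a j) ≠ 0 → Finsupp.weight w m + dj j = e := by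
    intro e
    apply homog_rep w f dj hdj (isWH_comp w hw e F)
    rw [hrange, htspan]
    exact hF e
  choose a ha₁ ha₂ using hrep
  set A : {x // x ∈ t} → MvPowerSeries (Fin n) ℂ :=
    fun j m => coeff m (a (Finsupp.weight w m + dj j) j) with hA
  have hFsum : F = ∑ j, A j * MvPolynomial.coeToMvPowerSeries.ringHom (f j) := by
    apply MvPowerSeries.ext
    intro m
    have h1 : MvPowerSeries.coeff m F = coeff m (comp w hw (Finsupp.weight w m) F) := by
      rw [coeff_comp, if_pos rfl]
    rw [h1, ← ha₁ (Finsupp.weight w m)]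
    rw [map_sum (MvPowerSeries.coeff m)]
    rw [MvPolynomial.coeff_sum]
    apply Finset.sum_congr rfl
    intro j _
    rw [MvPolynomial.coeff_mul, MvPowerSeries.coeff_mul]
    apply Finset.sum_congr rfl
    intro pq hpq
    rw [MvPolynomial.coeToMvPowerSeries.ringHom_apply, MvPolynomial.coeff_coe]
    by_cases hq : coeff pq.2 (f j) = 0
    · rw [hq, mul_zero, mul_zero]
    · have hw2 := hdj j hq
      have heq : Finsupp.weight w pq.1 + dj j = Finsupp.weight w m := by
        rw [← hw2, ← map_add, Finset.HasAntidiagonal.mem_antidiagonal.mp hpq]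
      have hAj : MvPowerSeries.coeff pq.1 (A j) =
          coeff pq.1 (a (Finsupp.weight w pq.1 + dj j) j) := rfl
      rw [hAj, heq]
  rw [hFsum]
  apply Ideal.sum_mem
  intro j _
  apply Ideal.mul_mem_left
  apply Ideal.mem_map_of_mem
  exact Ideal.subset_span (htS j.2)

end Stmt6Aux

open Stmt6Aux in
/-- Let `n ≥ 1`, `w : Fin n → ℕ` a positive weight function, and `I` an
ideal of `R = ℂ[x₁,…,xₙ]` generated by `w`-weighted-homogeneous polynomials.  Let
`T = ℂ[[x₁,…,xₙ]]`, `φ : R → T` the canonical inclusion, and `K = I·T`.  Then `R/I` is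
reduced if and only if `T/K` is reduced. -/
theorem stmt6 {n : ℕ} (hn : 1 ≤ n) (w : Fin n → ℕ) (hw : ∀ i, 0 < w i)
    (S : Set (MvPolynomial (Fin n) ℂ))
    (hS : ∀ f ∈ S, ∃ d : ℕ, MvPolynomial.IsWeightedHomogeneous w f d)
    (I : Ideal (MvPolynomial (Fin n) ℂ)) (hI : I = Ideal.span S)
    (φ : MvPolynomial (Fin n) ℂ →+* MvPowerSeries (Fin n) ℂ)
    (hφ : φ = MvPolynomial.coeToMvPowerSeries.ringHom)
    (K : Ideal (MvPowerSeries (Fin n) ℂ)) (hK : K = I.map φ) :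
    IsReduced (MvPolynomial (Fin n) ℂ ⧸ I) ↔ IsReduced (MvPowerSeries (Fin n) ℂ ⧸ K) := by
  subst hI hφ hK
  set φ := MvPolynomial.coeToMvPowerSeries.ringHom (σ := Fin n) (R := ℂ) with hφ
  set I := Ideal.span S with hI
  set K := I.map φ with hK
  constructor
  · intro hred
    constructor
    intro x hx
    obtain ⟨F, rfl⟩ := Ideal.Quotient.mk_surjective x
    obtain ⟨k, hk⟩ := hx
    rcases Nat.eq_zero_or_pos k with hk0 | hkpos
    · subst hk0
      rw [pow_zero] at hk
      have : Subsingleton (MvPowerSeries (Fin n) ℂ ⧸ K) :=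
        subsingleton_of_zero_eq_one hk.symm
      exact Subsingleton.elim _ _
    · rw [← map_pow, Ideal.Quotient.eq_zero_iff_mem] at hk
      have hcomps : ∀ e, comp w hw e F ∈ I := by
        intro e
        induction e using Nat.strong_induction_on with
        | _ e IH =>
        set G : MvPowerSeries (Fin n) ℂ :=
          F - φ (∑ c ∈ Finset.range e, comp w hw c F) with hG
        have hsumI : (∑ c ∈ Finset.range e, comp w hw c F) ∈ I :=
          Ideal.sum_mem _ fun c hc => IH c (Finset.mem_range.mp hc)
        have hFG : F - G ∈ K := by
          rw [hG, sub_sub_cancel]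
          exact Ideal.mem_map_of_mem _ hsumI
        have hGk : G ^ k ∈ K := by
          have hmk : Ideal.Quotient.mk K G = Ideal.Quotient.mk K F := by
            rw [Ideal.Quotient.mk_eq_mk_iff_sub_mem]
            exact (Submodule.neg_mem_iff _).mp (by simpa [neg_sub] using hFG)
          rw [← Ideal.Quotient.eq_zero_iff_mem, map_pow, hmk, ← map_pow,
            Ideal.Quotient.eq_zero_iff_mem]
          exact hk
        have hlow : ∀ c < e, comp w hw c G = 0 := by
          intro c hc
          rw [hG, comp_sub, comp_coe, map_sum]
          rw [Finset.sum_eq_single c]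
          · rw [(isWH_comp w hw c F).weightedHomogeneousComponent_same, sub_self]
          · intro b _ hb
            exact (isWH_comp w hw b F).weightedHomogeneousComponent_ne c (Ne.symm hb)
          · intro hce
            exact absurd (Finset.mem_range.mpr hc) hce
        have hcompe : comp w hw e G = comp w hw e F := by
          rw [hG, comp_sub, comp_coe, map_sum, Finset.sum_eq_zero, sub_zero]
          intro b hb
          exact (isWH_comp w hw b F).weightedHomogeneousComponent_ne e
            (Nat.ne_of_lt (Finset.mem_range.mp hb)).symm
        have hp := (comp_pow w hw hlow k hkpos).2
        rw [hcompe] at hp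
        have hmemI : (comp w hw e F) ^ k ∈ I := by
          rw [← hp]
          exact comp_mem_of_mem_K w hw hS hGk (k * e)
        have hnil : IsNilpotent (Ideal.Quotient.mk I (comp w hw e F)) :=
          ⟨k, by rw [← map_pow, Ideal.Quotient.eq_zero_iff_mem]; exact hmemI⟩
        rw [← Ideal.Quotient.eq_zero_iff_mem]
        exact hnil.eq_zero
      rw [Ideal.Quotient.eq_zero_iff_mem]
      exact mem_K_of_comps w hw hS hcomps
  · intro hred
    constructor
    intro x hx
    obtain ⟨p, rfl⟩ := Ideal.Quotient.mk_surjective x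
    obtain ⟨k, hk⟩ := hx
    rcases Nat.eq_zero_or_pos k with hk0 | hkpos
    · subst hk0
      rw [pow_zero] at hk
      have : Subsingleton (MvPolynomial (Fin n) ℂ ⧸ I) :=
        subsingleton_of_zero_eq_one hk.symm
      exact Subsingleton.elim _ _
    · rw [← map_pow, Ideal.Quotient.eq_zero_iff_mem] at hk
      have hKmem : φ p ^ k ∈ K := by
        rw [← map_pow]
        exact Ideal.mem_map_of_mem _ hk
      have hnil : IsNilpotent (Ideal.Quotient.mk K (φ p)) :=
        ⟨k, by rw [← map_pow, Ideal.Quotient.eq_zero_iff_mem]; exact hKmem⟩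
      have h0 : φ p ∈ K := by
        rw [← Ideal.Quotient.eq_zero_iff_mem]
        exact hnil.eq_zero
      have hwhc : ∀ e, MvPolynomial.weightedHomogeneousComponent w e p ∈ I := fun e => by
        rw [← comp_coe w hw]
        exact comp_mem_of_mem_K w hw hS h0 e
      have hpI : p ∈ I := by
        have hsum := MvPolynomial.sum_weightedHomogeneousComponent w p
        rw [← hsum, finsum_eq_sum _ (MvPolynomial.weightedHomogeneousComponent_finsupp p)]
        exact Ideal.sum_mem _ fun e _ => hwhc e
      rw [Ideal.Quotient.eq_zero_iff_mem]
      exact hpI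
end

section
/- Let 𝔰𝔬𝔩₂ denote the complex Lie algebra of upper-triangular 2×2 complex matrices with trace zero, let V be a finite-dimensional complex vector space with m = dim_ℂ V, and let θ : 𝔰𝔬𝔩₂ → End(V) be a homomorphism of complex Lie algebras. Then there exist a constant c ∈ ℂ and a ℂ-linear functional λ : 𝔰𝔬𝔩₂ → ℂ such that det(θ(x)) = c · (λ(x))^m for every x ∈ 𝔰𝔬𝔩₂. -/
open NormedSpace in
lemma exp_semiconj {𝔸 : Type*} [NormedRing 𝔸] [NormedAlgebra ℂ 𝔸] [CompleteSpace 𝔸]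
    (X Y Z : 𝔸) (h : X * Y = Y * Z) : exp X * Y = Y * exp Z := by
  have hpow : ∀ n : ℕ, X ^ n * Y = Y * Z ^ n := by
    intro n
    induction n with
    | zero => simp
    | succ k ih =>
        rw [pow_succ, pow_succ, mul_assoc, h, ← mul_assoc, ih, mul_assoc]
  rw [exp_eq_tsum (𝕂 := ℂ)]
  rw [← (expSeries_summable' (𝕂 := ℂ) X).tsum_mul_right,
    ← (expSeries_summable' (𝕂 := ℂ) Z).tsum_mul_left]
  congr 1
  ext n
  rw [smul_mul_assoc, hpow, mul_smul_comm]

open NormedSpace in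
lemma det_smul_add_smul {n : Type*} [Fintype n] [DecidableEq n] (A B : Matrix n n ℂ)
    (h : A * B = B * A + (2:ℂ) • B) (a b : ℂ) :
    (a • A + b • B).det = a ^ (Fintype.card n) * A.det := by
  letI : SeminormedRing (Matrix n n ℂ) := Matrix.linftyOpSemiNormedRing
  letI : NormedRing (Matrix n n ℂ) := Matrix.linftyOpNormedRing
  letI : NormedAlgebra ℂ (Matrix n n ℂ) := Matrix.linftyOpNormedAlgebra
  have hsemi : ∀ t : ℂ, (t • A) * B = B * (t • A + (2*t) • 1) := by
    intro t
    rw [smul_mul_assoc, h, mul_add, mul_smul_comm, mul_smul_comm, mul_one, smul_add, smul_smul]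
    rw [mul_comm t 2]
  have hconj : ∀ t : ℂ, (a • A + (Complex.exp (2*t) * b) • B).det = (a • A + b • B).det := by
    intro t
    obtain ⟨U, hU⟩ := Matrix.isUnit_exp (t • A)
    have h2 : exp (t • A + (2*t) • (1 : Matrix n n ℂ))
        = Complex.exp (2*t) • exp (t • A) := by
      refine (exp_add_of_commute_of_mem_ball (𝕂 := ℂ) ((Commute.refl (t • A)).smul_right (2*t) |>.mul_right
        (Commute.one_right _) |> fun _ => ((Commute.one_right (t • A)).smul_right (2*t)))
        (by rw [expSeries_radius_eq_top]; exact edist_lt_top _ _)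
        (by rw [expSeries_radius_eq_top]; exact edist_lt_top _ _)).trans ?_
      have : ((2*t) • (1 : Matrix n n ℂ)) = algebraMap ℂ (Matrix n n ℂ) (2*t) := by
        rw [Algebra.algebraMap_eq_smul_one]
      rw [this, ← algebraMap_exp_comm, ← Complex.exp_eq_exp_ℂ,
        Algebra.algebraMap_eq_smul_one, mul_smul_comm, mul_one]
      rfl
    have hUB : (U : Matrix n n ℂ) * B = Complex.exp (2*t) • (B * U) := by
      have h1 : exp (t • A) * B = B * exp (t • A + (2*t) • 1) :=
        exp_semiconj _ _ _ (hsemi t)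
      rw [h2, mul_smul_comm] at h1
      rw [hU, h1]
    have hUA : (U : Matrix n n ℂ) * A = A * (U : Matrix n n ℂ) := by
      have : Commute (exp (t • A)) A := ((Commute.refl A).smul_left t).exp_left
      rw [hU]; exact this
    have key : (U : Matrix n n ℂ) * (a • A + b • B) * (U⁻¹ : (Matrix n n ℂ)ˣ)
        = a • A + (Complex.exp (2*t) * b) • B := by
      have : (U : Matrix n n ℂ) * (a • A + b • B)
          = (a • A + (Complex.exp (2*t) * b) • B) * U := by
        rw [mul_add, add_mul, mul_smul_comm, mul_smul_comm, hUA, hUB,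
          smul_mul_assoc, smul_mul_assoc, smul_smul, mul_comm b]
      rw [this, Units.mul_inv_cancel_right]
    calc (a • A + (Complex.exp (2*t) * b) • B).det
        = ((U : Matrix n n ℂ) * (a • A + b • B) * (U⁻¹ : (Matrix n n ℂ)ˣ)).det := by rw [key]
      _ = (a • A + b • B).det := Matrix.det_units_conj _ _
  by_cases hb : b = 0
  · subst hb
    simp [Matrix.det_smul]
  · have hfs : ∀ s : ℂ, s ≠ 0 → (a • A + s • B).det = (a • A + b • B).det := by
      intro s hs
      have hsb : Complex.exp (2 * (Complex.log (s/b) / 2)) * b = s := by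
        rw [mul_div_cancel₀ _ (two_ne_zero), Complex.exp_log (div_ne_zero hs hb),
          div_mul_cancel₀ _ hb]
      have := hconj (Complex.log (s/b) / 2)
      rwa [hsb] at this
    have hcont : Continuous fun s : ℂ => (a • A + s • B).det :=
      Continuous.matrix_det (continuous_const.add (continuous_id.smul continuous_const))
    have hfun : (fun s : ℂ => (a • A + s • B).det) = fun _ => (a • A + b • B).det :=
      Continuous.ext_on (dense_compl_singleton 0) hcont continuous_const
        (fun s hs => hfs s hs)
    have h0 := congrFun hfun 0
    simp only [zero_smul, add_zero] at h0
    rw [← h0, Matrix.det_smul]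

attribute [local instance 100] LieRing.ofAssociativeRing

def sol2 : LieSubalgebra ℂ (Matrix (Fin 2) (Fin 2) ℂ) where
  carrier := {M | M 1 0 = 0 ∧ M 0 0 + M 1 1 = 0}
  zero_mem' := by simp
  add_mem' := by
    rintro a b ⟨ha1, ha2⟩ ⟨hb1, hb2⟩
    refine ⟨by simp [ha1, hb1], ?_⟩
    simp only [Matrix.add_apply]
    linear_combination ha2 + hb2
  smul_mem' := by
    rintro c a ⟨ha1, ha2⟩
    refine ⟨by simp [ha1], ?_⟩
    simp only [Matrix.smul_apply, smul_eq_mul]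
    linear_combination c * ha2
  lie_mem' := by
    rintro x y ⟨hx1, hx2⟩ ⟨hy1, hy2⟩
    constructor
    · simp [Ring.lie_def, Matrix.sub_apply, Matrix.mul_apply, Fin.sum_univ_two, hx1, hy1]
    · simp only [Ring.lie_def, Matrix.sub_apply, Matrix.mul_apply, Fin.sum_univ_two,
        hx1, hy1]
      ring

/-- For any finite-dimensional complex representation
`θ : 𝔰𝔬𝔩₂ → End(V)` with `m = dim V`, there are `c ∈ ℂ` and a linear functional
`λ : 𝔰𝔬𝔩₂ → ℂ` with `det (θ x) = c * (λ x) ^ m` for all `x`. -/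
theorem stmt7 {V : Type*} [AddCommGroup V] [Module ℂ V] [FiniteDimensional ℂ V]
    (m : ℕ) (hm : m = Module.finrank ℂ V)
    (θ : sol2 →ₗ⁅ℂ⁆ Module.End ℂ V) :
    ∃ (c : ℂ) (lam : sol2 →ₗ[ℂ] ℂ),
      ∀ x : sol2, LinearMap.det (θ x) = c * lam x ^ m := by
  classical
  let bV := Module.finBasis ℂ V
  have hh : (!![1,0;0,-1] : Matrix (Fin 2) (Fin 2) ℂ) ∈ sol2 := ⟨by simp, by simp⟩
  have he : (!![0,1;0,0] : Matrix (Fin 2) (Fin 2) ℂ) ∈ sol2 := ⟨by simp, by simp⟩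
  set h : sol2 := ⟨_, hh⟩ with hhdef
  set e : sol2 := ⟨_, he⟩ with hedef
  have hdecomp : ∀ x : sol2, x = (x.1 0 0) • h + (x.1 0 1) • e := by
    intro x
    obtain ⟨hx1, hx2⟩ := x.2
    apply Subtype.ext
    show (x : Matrix (Fin 2) (Fin 2) ℂ) = (x.1 0 0) • h.1 + (x.1 0 1) • e.1
    ext i j
    fin_cases i <;> fin_cases j <;>
      norm_num [hhdef, hedef, Matrix.cons_val_zero, Matrix.cons_val_one] <;>
      first
        | linear_combination hx2
        | linear_combination hx1
  have hbracket : ⁅h, e⁆ = (2:ℂ) • e := by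
    apply Subtype.ext
    show ⁅h.1, e.1⁆ = (2:ℂ) • e.1
    ext i j
    fin_cases i <;> fin_cases j <;>
      norm_num [hhdef, hedef, Ring.lie_def, Matrix.mul_apply, Fin.sum_univ_two]
  let A := LinearMap.toMatrixAlgEquiv bV (θ h)
  let B := LinearMap.toMatrixAlgEquiv bV (θ e)
  have hEnd : θ h * θ e = θ e * θ h + (2:ℂ) • θ e := by
    have h1 : ⁅θ h, θ e⁆ = (2:ℂ) • θ e := by
      rw [← LieHom.map_lie, hbracket, map_smul]
    rw [Ring.lie_def] at h1
    rw [← h1]; abel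
  have hAB : A * B = B * A + (2:ℂ) • B := by
    have := congrArg (LinearMap.toMatrixAlgEquiv bV) hEnd
    rwa [map_mul, map_add, map_mul, map_smul] at this
  let lam : sol2 →ₗ[ℂ] ℂ :=
    { toFun := fun x => x.1 0 0
      map_add' := fun x y => rfl
      map_smul' := fun c x => rfl }
  refine ⟨A.det, lam, fun x => ?_⟩
  conv_lhs => rw [hdecomp x]
  rw [map_add, map_smul, map_smul, ← LinearMap.det_toMatrix bV]
  have hmat : LinearMap.toMatrix bV bV ((x.1 0 0) • θ h + (x.1 0 1) • θ e)
      = (x.1 0 0) • A + (x.1 0 1) • B := by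
    rw [map_add, map_smul, map_smul]; rfl
  rw [hmat, det_smul_add_smul A B hAB, Fintype.card_fin, hm, mul_comm]
  rfl
end

section
/- Let n ≥ 3 and g ≥ 1. Let L be the free complex Lie algebra on the 2g generators a₁, b₁, …, a_g, b_g, and set r = Σ_{i=1}^{g} ⁅a_i, b_i⁆ ∈ L. Then there exists a Lie algebra homomorphism ρ : L → 𝔰𝔩_n(ℂ) such that ρ(r) ≠ 0 while ρ(⁅a_i, r⁆) = 0 and ρ(⁅b_i, r⁆) = 0 for every i = 1, …, g. -/
open LieAlgebra.SpecialLinear Matrix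

section aux

variable {n : ℕ}

/-- E₁₂ -/
noncomputable def E01 (hn : 3 ≤ n) : sl (Fin n) ℂ :=
  LieAlgebra.SpecialLinear.single ⟨0, by omega⟩ ⟨1, by omega⟩ (by simp [Fin.ext_iff]) (1 : ℂ)
/-- E₂₃ -/
noncomputable def E12 (hn : 3 ≤ n) : sl (Fin n) ℂ :=
  LieAlgebra.SpecialLinear.single ⟨1, by omega⟩ ⟨2, by omega⟩ (by simp [Fin.ext_iff]) (1 : ℂ)

lemma bracket_val (A B : sl (Fin n) ℂ) :
    (⁅A, B⁆ : sl (Fin n) ℂ).val = A.val * B.val - B.val * A.val := rfl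

lemma stdmul (i j k l : Fin n) (h : j ≠ k) :
    Matrix.single i j (1 : ℂ) * Matrix.single k l 1 = 0 :=
  Matrix.single_mul_single_of_ne (c := (1 : ℂ)) i j k h 1

lemma bracket_E01_E12 (hn : 3 ≤ n) :
    (⁅E01 hn, E12 hn⁆ : sl (Fin n) ℂ).val
      = Matrix.single ⟨0, by omega⟩ ⟨2, by omega⟩ (1:ℂ) := by
  rw [bracket_val]
  simp only [E01, E12, LieAlgebra.SpecialLinear.val_single]
  rw [Matrix.single_mul_single_same, stdmul _ _ _ _ (by simp [Fin.ext_iff])]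
  simp

lemma bE01 (hn : 3 ≤ n) : ⁅E01 hn, (⁅E01 hn, E12 hn⁆ : sl (Fin n) ℂ)⁆ = 0 := by
  apply Subtype.ext
  rw [bracket_val, bracket_E01_E12]
  simp only [E01, LieAlgebra.SpecialLinear.val_single]
  rw [stdmul _ _ _ _ (by simp [Fin.ext_iff]), stdmul _ _ _ _ (by simp [Fin.ext_iff])]
  simp

lemma bE12 (hn : 3 ≤ n) : ⁅E12 hn, (⁅E01 hn, E12 hn⁆ : sl (Fin n) ℂ)⁆ = 0 := by
  apply Subtype.ext
  rw [bracket_val, bracket_E01_E12]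
  simp only [E12, LieAlgebra.SpecialLinear.val_single]
  rw [stdmul _ _ _ _ (by simp [Fin.ext_iff]), stdmul _ _ _ _ (by simp [Fin.ext_iff])]
  simp

end aux

theorem stmt9 (n g : ℕ) (hn : 3 ≤ n) (hg : 1 ≤ g)
    (a b : Fin g → FreeLieAlgebra ℂ (Fin g ⊕ Fin g))
    (ha : ∀ i, a i = FreeLieAlgebra.of ℂ (Sum.inl i))
    (hb : ∀ i, b i = FreeLieAlgebra.of ℂ (Sum.inr i))
    (r : FreeLieAlgebra ℂ (Fin g ⊕ Fin g))
    (hr : r = ∑ i : Fin g, ⁅a i, b i⁆) :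
    ∃ ρ : FreeLieAlgebra ℂ (Fin g ⊕ Fin g) →ₗ⁅ℂ⁆ LieAlgebra.SpecialLinear.sl (Fin n) ℂ,
      ρ r ≠ 0 ∧ ∀ i : Fin g, ρ ⁅a i, r⁆ = 0 ∧ ρ ⁅b i, r⁆ = 0 := by
  haveI : NeZero g := ⟨by omega⟩
  set f : Fin g ⊕ Fin g → sl (Fin n) ℂ := fun x =>
    match x with
    | Sum.inl i => if i = 0 then E01 hn else 0
    | Sum.inr i => if i = 0 then E12 hn else 0 with hf
  set ρ := FreeLieAlgebra.lift ℂ f with hρ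
  have hρr : ρ r = ⁅E01 hn, E12 hn⁆ := by
    rw [hr, ← LieHom.coe_toLinearMap, map_sum]
    simp only [LieHom.coe_toLinearMap]
    rw [Finset.sum_eq_single (0 : Fin g)]
    · simp [hρ, ha, hb, hf, FreeLieAlgebra.lift_of_apply]
    · intro i _ hi
      simp [hρ, ha, hb, hf, FreeLieAlgebra.lift_of_apply, hi]
    · simp
  refine ⟨ρ, ?_, ?_⟩
  · rw [hρr]
    intro h
    have h' := congrArg Subtype.val h
    rw [bracket_E01_E12 hn] at h'
    have h'' := congrFun (congrFun h' ⟨0, by omega⟩) ⟨2, by omega⟩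
    simp [Matrix.single] at h''
  · intro i
    constructor
    · rw [LieHom.map_lie, hρr, ha,
        show ρ (FreeLieAlgebra.of ℂ (Sum.inl i)) = f (Sum.inl i) from
          FreeLieAlgebra.lift_of_apply f _]
      by_cases hi : i = 0 <;> simp [hf, hi, bE01 hn]
    · rw [LieHom.map_lie, hρr, hb,
        show ρ (FreeLieAlgebra.of ℂ (Sum.inr i)) = f (Sum.inr i) from
          FreeLieAlgebra.lift_of_apply f _]
      by_cases hi : i = 0 <;> simp [hf, hi, bE12 hn]
end

section
/- Let n ≥ 3 and g ≥ 1. Let L be the free complex Lie algebra on the 2g generators a₁, b₁, …, a_g, b_g, set r = Σ_{i=1}^{g} ⁅a_i, b_i⁆, let J' be the Lie ideal of L generated by the elements ⁅a_i, r⁆ and ⁅b_i, r⁆ (i = 1, …, g), and let J be the Lie ideal of L generated by r. Then J' ⊆ J, so the identity on generators induces a surjective Lie algebra homomorphism q : L/J' → L/J, and the precomposition map q* : Hom_Lie(L/J, 𝔰𝔩_n(ℂ)) → Hom_Lie(L/J', 𝔰𝔩_n(ℂ)), ψ ↦ ψ ∘ q, is NOT surjective. -/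
def myLiftQ {R L L' : Type*} [CommRing R] [LieRing L] [LieAlgebra R L]
    [LieRing L'] [LieAlgebra R L'] (I : LieIdeal R L) (φ : L →ₗ⁅R⁆ L')
    (h : ∀ x ∈ I, φ x = 0) : (L ⧸ I) →ₗ⁅R⁆ L' :=
  { toLinearMap := Submodule.liftQ (I : Submodule R L) φ.toLinearMap
      (fun x hx => h x hx)
    map_lie' := by
      rintro ⟨x⟩ ⟨y⟩
      show Submodule.liftQ _ _ _ ⁅LieSubmodule.Quotient.mk (N := I) x,
        LieSubmodule.Quotient.mk (N := I) y⁆ = _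
      rw [← LieSubmodule.Quotient.mk_bracket]
      show φ ⁅x, y⁆ = ⁅φ x, φ y⁆
      simp }

@[simp] lemma myLiftQ_mk {R L L' : Type*} [CommRing R] [LieRing L] [LieAlgebra R L]
    [LieRing L'] [LieAlgebra R L'] (I : LieIdeal R L) (φ : L →ₗ⁅R⁆ L')
    (h : ∀ x ∈ I, φ x = 0) (x : L) :
    myLiftQ I φ h (LieSubmodule.Quotient.mk (N := I) x) = φ x := rfl

/-- Let `n ≥ 3`, `g ≥ 1`, `L` the free complex Lie algebra on
`a₁, b₁, …, a_g, b_g`, `r = Σᵢ ⁅aᵢ, bᵢ⁆`, `J'` the Lie ideal generated by the elements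
`⁅aᵢ, r⁆, ⁅bᵢ, r⁆`, and `J` the Lie ideal generated by `r`.  Then `J' ⊆ J`, and for the
Lie algebra map `q : L/J' → L/J` induced by the identity on generators (i.e. satisfying
`q ∘ mk = mk`), the precomposition map `ψ ↦ ψ ∘ q` from `Hom_Lie(L/J, 𝔰𝔩ₙ(ℂ))` to
`Hom_Lie(L/J', 𝔰𝔩ₙ(ℂ))` is not surjective. -/
theorem stmt10 (n g : ℕ) (hn : 3 ≤ n) (hg : 1 ≤ g)
    (a b : Fin g → FreeLieAlgebra ℂ (Fin g ⊕ Fin g))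
    (ha : ∀ i, a i = FreeLieAlgebra.of ℂ (Sum.inl i))
    (hb : ∀ i, b i = FreeLieAlgebra.of ℂ (Sum.inr i))
    (r : FreeLieAlgebra ℂ (Fin g ⊕ Fin g))
    (hr : r = ∑ i : Fin g, ⁅a i, b i⁆)
    (J' J : LieIdeal ℂ (FreeLieAlgebra ℂ (Fin g ⊕ Fin g)))
    (hJ' : J' = LieSubmodule.lieSpan ℂ (FreeLieAlgebra ℂ (Fin g ⊕ Fin g))
      {x | ∃ i : Fin g, x = ⁅a i, r⁆ ∨ x = ⁅b i, r⁆})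
    (hJ : J = LieSubmodule.lieSpan ℂ (FreeLieAlgebra ℂ (Fin g ⊕ Fin g)) {r}) :
    J' ≤ J ∧
    ∀ q : (FreeLieAlgebra ℂ (Fin g ⊕ Fin g) ⧸ J') →ₗ⁅ℂ⁆
        (FreeLieAlgebra ℂ (Fin g ⊕ Fin g) ⧸ J),
      (∀ x : FreeLieAlgebra ℂ (Fin g ⊕ Fin g),
        q (LieSubmodule.Quotient.mk (N := J') x) = LieSubmodule.Quotient.mk (N := J) x) →
      ¬ Function.Surjective
        (fun ψ : (FreeLieAlgebra ℂ (Fin g ⊕ Fin g) ⧸ J) →ₗ⁅ℂ⁆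
            LieAlgebra.SpecialLinear.sl (Fin n) ℂ => ψ.comp q) := by
  have hrJ : r ∈ J := by
    rw [hJ]; exact LieSubmodule.subset_lieSpan rfl
  constructor
  · rw [hJ']
    rw [LieSubmodule.lieSpan_le]
    rintro x ⟨i, hx | hx⟩ <;> subst hx <;> exact J.lie_mem hrJ
  · -- indices in Fin n
    have h0 : 0 < n := by omega
    have h1 : 1 < n := by omega
    have h2 : 2 < n := by omega
    set i0 : Fin n := ⟨0, h0⟩
    set i1 : Fin n := ⟨1, h1⟩
    set i2 : Fin n := ⟨2, h2⟩
    have h10 : i1 ≠ i0 := by simp [i0, i1, Fin.ext_iff]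
    have h21 : i2 ≠ i1 := by simp [i1, i2, Fin.ext_iff]
    have h20 : i2 ≠ i0 := by simp [i0, i2, Fin.ext_iff]
    set E01 : LieAlgebra.SpecialLinear.sl (Fin n) ℂ := LieAlgebra.SpecialLinear.single i0 i1 h10.symm (1 : ℂ)
    set E12 : LieAlgebra.SpecialLinear.sl (Fin n) ℂ := LieAlgebra.SpecialLinear.single i1 i2 h21.symm (1 : ℂ)
    set E02 : LieAlgebra.SpecialLinear.sl (Fin n) ℂ := LieAlgebra.SpecialLinear.single i0 i2 h20.symm (1 : ℂ)
    have hbr : ⁅E01, E12⁆ = E02 := by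
      apply Subtype.ext
      show E01.val * E12.val - E12.val * E01.val = E02.val
      simp only [E01, E12, E02, LieAlgebra.SpecialLinear.val_single]
      rw [Matrix.single_mul_single_same, Matrix.single_mul_single_of_ne (h := h20)]
      simp
    have hb1 : ⁅E01, E02⁆ = 0 := by
      apply Subtype.ext
      show E01.val * E02.val - E02.val * E01.val = (0 : LieAlgebra.SpecialLinear.sl (Fin n) ℂ).val
      simp only [E01, E02, LieAlgebra.SpecialLinear.val_single]
      rw [Matrix.single_mul_single_of_ne (h := h10), Matrix.single_mul_single_of_ne (h := h20)]
      simp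
    have hb2 : ⁅E12, E02⁆ = 0 := by
      apply Subtype.ext
      show E12.val * E02.val - E02.val * E12.val = (0 : LieAlgebra.SpecialLinear.sl (Fin n) ℂ).val
      simp only [E12, E02, LieAlgebra.SpecialLinear.val_single]
      rw [Matrix.single_mul_single_of_ne (h := h20), Matrix.single_mul_single_of_ne (h := h21)]
      simp
    have hE02 : E02 ≠ 0 := by
      intro h
      have := congrFun (congrFun (congrArg Subtype.val h) i0) i2
      simp [E02, Matrix.single] at this
    -- the map on generators
    set z0 : Fin g := ⟨0, hg⟩
    set f : Fin g ⊕ Fin g → LieAlgebra.SpecialLinear.sl (Fin n) ℂ :=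
      fun x => match x with
      | Sum.inl i => if i = z0 then E01 else 0
      | Sum.inr i => if i = z0 then E12 else 0
    set φ : FreeLieAlgebra ℂ (Fin g ⊕ Fin g) →ₗ⁅ℂ⁆ LieAlgebra.SpecialLinear.sl (Fin n) ℂ :=
      FreeLieAlgebra.lift ℂ f
    have hφa : ∀ i, φ (a i) = if i = z0 then E01 else 0 := by
      intro i; rw [ha i]; exact FreeLieAlgebra.lift_of_apply f _
    have hφb : ∀ i, φ (b i) = if i = z0 then E12 else 0 := by
      intro i; rw [hb i]; exact FreeLieAlgebra.lift_of_apply f _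
    have hφr : φ r = E02 := by
      have hsum : φ r = ∑ i : Fin g, φ ⁅a i, b i⁆ := by
        rw [hr]; exact map_sum φ.toLinearMap _ _
      rw [hsum, Finset.sum_eq_single z0]
      · rw [LieHom.map_lie, hφa, hφb, if_pos rfl, if_pos rfl, hbr]
      · intro i _ hi
        rw [LieHom.map_lie, hφa, if_neg hi, zero_lie]
      · simp
    have hφJ' : ∀ x ∈ J', φ x = 0 := by
      have : J' ≤ φ.ker := by
        rw [hJ', LieSubmodule.lieSpan_le]
        rintro x ⟨i, hx | hx⟩ <;> subst hx <;> rw [SetLike.mem_coe, φ.mem_ker, LieHom.map_lie, hφr]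
        · rw [hφa]
          by_cases h : i = z0
          · rw [if_pos h]; exact hb1
          · rw [if_neg h, zero_lie]
        · rw [hφb]
          by_cases h : i = z0
          · rw [if_pos h]; exact hb2
          · rw [if_neg h, zero_lie]
      exact fun x hx => (φ.mem_ker).mp (this hx)
    intro q hq hsurj
    obtain ⟨ψ, hψ⟩ := hsurj (myLiftQ J' φ hφJ')
    have := congrArg (fun F => F (LieSubmodule.Quotient.mk (N := J') r)) hψ
    simp only [LieHom.comp_apply, hq r, myLiftQ_mk] at this
    rw [(LieSubmodule.Quotient.mk_eq_zero').mpr hrJ, map_zero ψ] at this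
    rw [hφr] at this
    exact hE02 this.symm
end
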